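/- The Space KAM implements Closed Call-by-Name: for every closed λ-term t, there is a complete weak-head-reduction sequence t →wh^n u if and only if there is a complete Space KAM run ρ from the initial state (t, ε, ε) whose final state decodes to u and which contains exactly n β-transitions (transitions →βw or →β¬w). -/

import Mathlib

set_option autoImplicit false

/-! λ-terms with variable names in ℕ. -/
inductive Term : Type
  | var : ℕ → Term
  | lam : ℕ → Term → Term
  | app : Term → Term → Term
deriving DecidableEq

namespace Term

/-- Free variables. -/
def fv : Term → Finset ℕ
  | var x => {x}
  | lam x t => fv t \ {x}
  | app t u => fv t ∪ fv u

/-- A term is closed if it has no free variables. -/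
def closed (t : Term) : Prop := t.fv = ∅

/-- Substitution of `u` for the free occurrences of `x`; it is capture-avoiding
whenever the substituted term `u` is closed, which is the only case arising in
Closed Call-by-Name. -/
def subst (x : ℕ) (u : Term) : Term → Term
  | var y => if y = x then u else var y
  | lam y t => if y = x then lam y t else lam y (subst x u t)
  | app t r => app (subst x u t) (subst x u r)

/-- In-order (left-to-right) enumeration of the constructors (as subterm occurrences). -/
def inorder : Term → List Term
  | var x => [var x]
  | lam x t => lam x t :: inorder t
  | app t u => inorder t ++ app t u :: inorder u

/-- Membership in the deterministic λ-calculus `Λdet`: the right subterm of every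
application is a variable or an abstraction. -/
def IsDet : Term → Prop
  | var _ => True
  | lam _ t => IsDet t
  | app t u => IsDet t ∧ IsDet u ∧ ((∃ x, u = var x) ∨ ∃ x r, u = lam x r)

end Term

/-- Weak head reduction: `(λx.t) u r1 … rh →wh t{x:=u} r1 … rh`. -/
inductive Whr : Term → Term → Prop
  | beta (x : ℕ) (t u : Term) : Whr (Term.app (Term.lam x t) u) (Term.subst x u t)
  | appL {t t' : Term} (u : Term) : Whr t t' → Whr (Term.app t u) (Term.app t' u)

def WhNormal (t : Term) : Prop := ∀ u, ¬ Whr t u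

/-- `NSteps R n a b`: exactly `n` `R`-steps from `a` to `b`. -/
inductive NSteps {α : Type _} (R : α → α → Prop) : ℕ → α → α → Prop
  | refl (a : α) : NSteps R 0 a a
  | head {a b c : α} {n : ℕ} : R a b → NSteps R n b c → NSteps R (n + 1) a c

/-! Closures and (local) environments. -/
mutual
  inductive Clo : Type
    | mk : Term → Env → Clo
  inductive Env : Type
    | nil : Env
    | cons : ℕ → Clo → Env → Env
end

def Env.lookup : Env → ℕ → Option Clo
  | .nil, _ => none
  | .cons y c e, x => if y = x then some c else Env.lookup e x

def Env.dom : Env → Finset ℕ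
  | .nil => ∅
  | .cons x _ e => insert x (Env.dom e)

/-- Restriction `e|s` of an environment to a set of variables. -/
def Env.restrict : Env → Finset ℕ → Env
  | .nil, _ => .nil
  | .cons x c e, s => if x ∈ s then .cons x c (Env.restrict e s) else Env.restrict e s

mutual
  /-- Decoding of a closure into a λ-term. -/
  def Clo.decode : Clo → Term
    | .mk t e => Env.decode t e
  /-- Decoding: `(t, ε)↓ = t`, `(t, [x←c]·e)↓ = (t{x:=c↓}, e)↓`. -/
  def Env.decode : Term → Env → Term
    | t, .nil => t
    | t, .cons x c e => Env.decode (Term.subst x (Clo.decode c) t) e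
end

mutual
  /-- Hereditary number of closures in a closure (without sharing). -/
  def Clo.count : Clo → ℕ
    | .mk _ e => 1 + Env.count e
  def Env.count : Env → ℕ
    | .nil => 0
    | .cons _ c e => Clo.count c + Env.count e
end

mutual
  /-- A closure `(t,e)` is closed: `fv t ⊆ dom e` and hereditarily so. -/
  def Clo.Closed : Clo → Prop
    | .mk t e => t.fv ⊆ e.dom ∧ Env.ClosedE e
  def Env.ClosedE : Env → Prop
    | .nil => True
    | .cons _ c e => Clo.Closed c ∧ Env.ClosedE e
end

mutual
  /-- Environment domain invariant: `dom e = fv t`, hereditarily. -/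
  def Clo.DomInv : Clo → Prop
    | .mk t e => e.dom = t.fv ∧ Env.DomInvE e
  def Env.DomInvE : Env → Prop
    | .nil => True
    | .cons _ c e => Clo.DomInv c ∧ Env.DomInvE e
end

/-- Size of the left address of (the first occurrence of) `u` in the code `t0`:
the binary length of its index in the in-order enumeration of the constructors of `t0`. -/
def addrSize (t0 u : Term) : ℕ := Nat.size (t0.inorder.idxOf u)

mutual
  /-- Size of a closure, relative to the initial code `t0`. -/
  def Clo.size : Term → Clo → ℕ
    | t0, .mk u e => addrSize t0 u + Env.sizeE t0 e
  /-- Size of an environment, relative to the initial code `t0`. -/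
  def Env.sizeE : Term → Env → ℕ
    | _, .nil => 0
    | t0, .cons x c e => addrSize t0 (Term.var x) + Clo.size t0 c + Env.sizeE t0 e
end

def stackSize (t0 : Term) (S : List Clo) : ℕ := (S.map (Clo.size t0)).sum

/-- States of the (Naive/Space) KAM. -/
structure State where
  tm : Term
  env : Env
  stk : List Clo

/-- Size of a state, relative to the initial code `t0`. -/
def State.size (t0 : Term) (s : State) : ℕ :=
  addrSize t0 s.tm + Env.sizeE t0 s.env + stackSize t0 s.stk

/-- Closure count of a state: total number of closures occurring in it,
hereditarily and without sharing (the active term/environment pair is a closure). -/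
def State.count (s : State) : ℕ :=
  1 + Env.count s.env + (s.stk.map Clo.count).sum

def State.decode (s : State) : Term :=
  s.stk.foldl (fun a c => Term.app a c.decode) (Env.decode s.tm s.env)

def initState (t : Term) : State := ⟨t, .nil, []⟩

/-! The Naive KAM. -/
inductive NK : State → State → Prop
  | sea (t u : Term) (e : Env) (S : List Clo) :
      NK ⟨.app t u, e, S⟩ ⟨t, e, .mk u e :: S⟩
  | beta (x : ℕ) (t : Term) (e : Env) (c : Clo) (S : List Clo) :
      NK ⟨.lam x t, e, c :: S⟩ ⟨t, .cons x c e, S⟩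
  | sub {x : ℕ} {e : Env} {u : Term} {e' : Env} (S : List Clo) :
      Env.lookup e x = some (.mk u e') → NK ⟨.var x, e, S⟩ ⟨u, e', S⟩

def NKFinal (s : State) : Prop := ∀ s', ¬ NK s s'

/-- Naive KAM runs counting the number of β-transitions. -/
inductive NKRun : ℕ → State → State → Prop
  | refl (s : State) : NKRun 0 s s
  | sea {t u : Term} {e : Env} {S : List Clo} {s' : State} {n : ℕ} :
      NKRun n ⟨t, e, .mk u e :: S⟩ s' → NKRun n ⟨.app t u, e, S⟩ s'
  | beta {x : ℕ} {t : Term} {e : Env} {c : Clo} {S : List Clo} {s' : State} {n : ℕ} :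
      NKRun n ⟨t, .cons x c e, S⟩ s' → NKRun (n + 1) ⟨.lam x t, e, c :: S⟩ s'
  | sub {x : ℕ} {e : Env} {u : Term} {e' : Env} {S : List Clo} {s' : State} {n : ℕ} :
      Env.lookup e x = some (.mk u e') → NKRun n ⟨u, e', S⟩ s' → NKRun n ⟨.var x, e, S⟩ s'

/-! The Space KAM. -/
inductive SK : State → State → Prop
  | seav {t : Term} {x : ℕ} {e : Env} {c : Clo} (S : List Clo) :
      Env.lookup e x = some c →
      SK ⟨.app t (.var x), e, S⟩ ⟨t, e.restrict t.fv, c :: S⟩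
  | seanv {t u : Term} {e : Env} (S : List Clo) :
      (∀ x, u ≠ .var x) →
      SK ⟨.app t u, e, S⟩ ⟨t, e.restrict t.fv, .mk u (e.restrict u.fv) :: S⟩
  | betaw {x : ℕ} {t : Term} {e : Env} (c : Clo) (S : List Clo) :
      x ∉ t.fv → SK ⟨.lam x t, e, c :: S⟩ ⟨t, e, S⟩
  | betanw {x : ℕ} {t : Term} {e : Env} (c : Clo) (S : List Clo) :
      x ∈ t.fv → SK ⟨.lam x t, e, c :: S⟩ ⟨t, .cons x c e, S⟩
  | sub {x : ℕ} {e : Env} {u : Term} {e' : Env} (S : List Clo) :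
      Env.lookup e x = some (.mk u e') → SK ⟨.var x, e, S⟩ ⟨u, e', S⟩

def SKFinal (s : State) : Prop := ∀ s', ¬ SK s s'

/-- Space KAM runs counting the number of β-transitions (`→βw` and `→β¬w`). -/
inductive SKRun : ℕ → State → State → Prop
  | refl (s : State) : SKRun 0 s s
  | seav {t : Term} {x : ℕ} {e : Env} {c : Clo} {S : List Clo} {s' : State} {n : ℕ} :
      Env.lookup e x = some c →
      SKRun n ⟨t, e.restrict t.fv, c :: S⟩ s' → SKRun n ⟨.app t (.var x), e, S⟩ s'
  | seanv {t u : Term} {e : Env} {S : List Clo} {s' : State} {n : ℕ} :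
      (∀ x, u ≠ .var x) →
      SKRun n ⟨t, e.restrict t.fv, .mk u (e.restrict u.fv) :: S⟩ s' →
      SKRun n ⟨.app t u, e, S⟩ s'
  | betaw {x : ℕ} {t : Term} {e : Env} {c : Clo} {S : List Clo} {s' : State} {n : ℕ} :
      x ∉ t.fv → SKRun n ⟨t, e, S⟩ s' → SKRun (n + 1) ⟨.lam x t, e, c :: S⟩ s'
  | betanw {x : ℕ} {t : Term} {e : Env} {c : Clo} {S : List Clo} {s' : State} {n : ℕ} :
      x ∈ t.fv → SKRun n ⟨t, .cons x c e, S⟩ s' → SKRun (n + 1) ⟨.lam x t, e, c :: S⟩ s'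
  | sub {x : ℕ} {e : Env} {u : Term} {e' : Env} {S : List Clo} {s' : State} {n : ℕ} :
      Env.lookup e x = some (.mk u e') → SKRun n ⟨u, e', S⟩ s' → SKRun n ⟨.var x, e, S⟩ s'

/-! Concrete combinators. -/

/-- I := λx.x -/
def tmI : Term := .lam 0 (.var 0)
/-- θ := λx.λy.y (x x y)  (variables: x := 0, y := 1) -/
def tmTheta : Term := .lam 0 (.lam 1 (.app (.var 1) (.app (.app (.var 0) (.var 0)) (.var 1))))
/-- fix := θ θ -/
def tmFix : Term := .app tmTheta tmTheta
/-- x x y -/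
def xxy : Term := .app (.app (.var 0) (.var 0)) (.var 1)
/-- toyaux := λf.λz. z f f I  (f := 3, z := 2) -/
def tmToyaux : Term := .lam 3 (.lam 2 (.app (.app (.app (.var 2) (.var 3)) (.var 3)) tmI))
/-- toy := fix toyaux -/
def tmToy : Term := .app tmFix tmToyaux

/-- Scott encoding of binary strings (false = 0, true = 1; x0 := 4, x1 := 5, xε := 6):
`⟨ε⟩ := λx0.λx1.λxε.xε`, `⟨b·r⟩ := λx0.λx1.λxε.xb ⟨r⟩`. -/
def encStr : List Bool → Term
  | [] => .lam 4 (.lam 5 (.lam 6 (.var 6)))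
  | b :: r => .lam 4 (.lam 5 (.lam 6 (.app (.var (if b then 5 else 4)) (encStr r))))

/-- A variable fresh for `t`. -/
def freshVar (t : Term) : ℕ := t.fv.sup id + 1

/-- η-expansion: `η(t) := λx. t x` with `x ∉ fv t`. -/
def Term.eta (t : Term) : Term := .lam (freshVar t) (.app t (.var (freshVar t)))

/-- n-fold η-expansion. -/
def etaN (n : ℕ) (t : Term) : Term := Term.eta^[n] t

/-! Environment families for the Naive KAM scrolling invariant
(variables: x := 0, y := 1, z := 2, f := 3, x0 := 4, x1 := 5, xε := 6). -/

/-- `e0 := [x←(θ,ε)]·[y←(toyaux,ε)]`, `e(i+1) := [x←(x,ei)]·[y←(y,ei)]`. -/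
def eE : ℕ → Env
  | 0 => .cons 0 (.mk tmTheta .nil) (.cons 1 (.mk tmToyaux .nil) .nil)
  | i + 1 => .cons 0 (.mk (.var 0) (eE i)) (.cons 1 (.mk (.var 1) (eE i)) .nil)

/-- `e″0 := ε`, `e″(i+1) := [xε←(I,e′i)]·[x1←(f,e′i)]·[x0←(f,e′i)]·e″i`
(with `e′i` inlined). -/
def eDD (s : List Bool) : ℕ → Env
  | 0 => .nil
  | i + 1 =>
    let ep : Env := .cons 2 (.mk (encStr (s.drop i)) (eDD s i)) (.cons 3 (.mk xxy (eE i)) .nil)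
    .cons 6 (.mk tmI ep) (.cons 5 (.mk (.var 3) ep) (.cons 4 (.mk (.var 3) ep) (eDD s i)))

/-- `e′i := [z←(⟨b(i+1)⋯bn⟩, e″i)]·[f←(x x y, ei)]`. -/
def eP (s : List Bool) (i : ℕ) : Env :=
  .cons 2 (.mk (encStr (s.drop i)) (eDD s i)) (.cons 3 (.mk xxy (eE i)) .nil)

/-! The family `tn` for the abstract-time overhead explosion
(variables `xi := i`). -/

/-- `x0 x1 ⋯ xn`. -/
def varsApp : ℕ → Term
  | 0 => .var 0
  | n + 1 => .app (varsApp n) (.var (n + 1))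

/-- Term component of `Sn`: `x0 x0` for `n = 0`, `x0 ⋯ xn` for `n ≥ 1`. -/
def sTerm : ℕ → Term
  | 0 => .app (.var 0) (.var 0)
  | n + 1 => varsApp (n + 1)

/-- `e0 := [x0←(I,ε)]`, `e(n+1) := [x(n+1)←Sn]·en`. -/
def eN : ℕ → Env
  | 0 => .cons 0 (.mk tmI .nil) .nil
  | n + 1 => .cons (n + 1) (.mk (sTerm n) (eN n)) (eN n)

/-- `Sn := (sTerm n, en)`. -/
def sClo (n : ℕ) : Clo := .mk (sTerm n) (eN n)

/-- `Ci⟨t⟩ := λxi. t (x0 ⋯ xi)` (with `C0⟨t⟩ = λx0. t (x0 x0)`). -/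
def cPlug (i : ℕ) (t : Term) : Term := .lam i (.app t (sTerm i))

/-- `C0⟨C1⟨⋯Cn⟨t⟩⋯⟩⟩`. -/
def nest (n : ℕ) (t : Term) : Term := (List.range (n + 1)).foldr cPlug t

/-- `tn := C0⟨C1⟨⋯Cn⟨λy.I⟩⋯⟩⟩ I`. -/
def tN (n : ℕ) : Term := .app (nest n (.lam 1 tmI)) tmI

/-! Global-copy scrolling terms (s′ := 7, z := 2, x := 0, f := 3). -/

/-- `λf.λs′. s′ f f z` (free variable z). -/
def tScroll : Term :=
  .lam 3 (.lam 7 (.app (.app (.app (.var 7) (.var 3)) (.var 3)) (.var 2)))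

/-- `glCpy := λx.( fix (λf.λs′. s′ f f x) ) x`. -/
def glCpy : Term :=
  .lam 0 (.app (.app tmFix
    (.lam 3 (.lam 7 (.app (.app (.app (.var 7) (.var 3)) (.var 3)) (.var 0)))))
    (.var 0))

/-! The Space LAM. -/

structure LState where
  dump : List (Clo × List Clo)
  tm : Term
  env : Env
  stk : List Clo

inductive LAM : LState → LState → Prop
  | sea {D : List (Clo × List Clo)} {t u : Term} {e : Env} {S : List Clo} :
      LAM ⟨D, .app t u, e, S⟩ ⟨(.mk t (e.restrict t.fv), S) :: D, u, e.restrict u.fv, []⟩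
  | ret {D : List (Clo × List Clo)} {u : Term} {e' : Env} {S : List Clo}
      {x : ℕ} {t : Term} {e : Env} :
      LAM ⟨(.mk u e', S) :: D, .lam x t, e, []⟩ ⟨D, u, e', .mk (.lam x t) e :: S⟩
  | betaw {D : List (Clo × List Clo)} {x : ℕ} {t : Term} {e : Env} {c : Clo} {S : List Clo} :
      x ∉ t.fv → LAM ⟨D, .lam x t, e, c :: S⟩ ⟨D, t, e, S⟩
  | betanw {D : List (Clo × List Clo)} {x : ℕ} {t : Term} {e : Env} {c : Clo} {S : List Clo} :
      x ∈ t.fv → LAM ⟨D, .lam x t, e, c :: S⟩ ⟨D, t, .cons x c e, S⟩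
  | sub {D : List (Clo × List Clo)} {x : ℕ} {e : Env} {u : Term} {e' : Env} {S : List Clo} :
      Env.lookup e x = some (.mk u e') → LAM ⟨D, .var x, e, S⟩ ⟨D, u, e', S⟩

def LFinal (ls : LState) : Prop := ∀ ls', ¬ LAM ls ls'

/-- The Space KAM state `(t,e,S)` seen as the Space LAM state `(ε,t,e,S)`. -/
def embed (s : State) : LState := ⟨[], s.tm, s.env, s.stk⟩

def lInit (t : Term) : LState := ⟨[], t, .nil, []⟩

def LState.size (t0 : Term) (ls : LState) : ℕ :=
  (ls.dump.map (fun p => Clo.size t0 p.1 + stackSize t0 p.2)).sum +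
    addrSize t0 ls.tm + Env.sizeE t0 ls.env + stackSize t0 ls.stk

/-- A LAM-sequence from `a` whose first state with empty dump after `a` is its target. -/
inductive LRunToEmpty : LState → LState → Prop
  | single {a b : LState} : LAM a b → b.dump = [] → LRunToEmpty a b
  | cons {a b c : LState} : LAM a b → b.dump ≠ [] → LRunToEmpty b c → LRunToEmpty a c

/-! Log-sensitive Turing machines. -/

/-- Input-tape alphabet {0, 1, L, R}. -/
inductive ISym : Type | zero | one | lend | rend
deriving DecidableEq

/-- Work-tape alphabet {0, 1, □}. -/
inductive WSym : Type | zero | one | blank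
deriving DecidableEq

/-- Head moves. -/
inductive Move : Type | L | R | N
deriving DecidableEq

/-- A log-sensitive Turing machine: states `Fin n`, initial state, final states
`qtrue = s1` and `qfalse = s0`, and a deterministic transition function reading the
current state and the two scanned symbols, writing on the work tape, moving both
heads, and changing state (`none` = halt). -/
structure TM where
  n : ℕ
  start : Fin n
  qtrue : Fin n
  qfalse : Fin n
  δ : Fin n → ISym → WSym → Option (Fin n × WSym × Move × Move)

/-- A configuration: state, input-head position (on the tape `L i R`), and the
work tape split as (left part, reversed) / scanned symbol / (right part). -/
structure Config (M : TM) where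
  q : Fin M.n
  ipos : ℕ
  wl : List WSym
  wcur : WSym
  wr : List WSym

/-- The symbol of the input tape `L i R` at a given position. -/
def inputAt (i : List Bool) (p : ℕ) : ISym :=
  if p = 0 then .lend
  else if h : p - 1 < i.length then (if i.get ⟨p - 1, h⟩ then .one else .zero)
  else .rend

def moveIpos (p : ℕ) : Move → ℕ
  | .L => p - 1
  | .R => p + 1
  | .N => p

def moveWork (wl : List WSym) (c : WSym) (wr : List WSym) : Move → List WSym × WSym × List WSym
  | .L => match wl with
    | [] => ([], .blank, c :: wr)
    | a :: l => (l, a, c :: wr)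
  | .R => match wr with
    | [] => (c :: wl, .blank, [])
    | a :: r => (c :: wl, a, r)
  | .N => (wl, c, wr)

/-- One transition of the TM `M` on input `i`. -/
def TMStep (M : TM) (i : List Bool) (c c' : Config M) : Prop :=
  ∃ q' w mi mw, M.δ c.q (inputAt i c.ipos) c.wcur = some (q', w, mi, mw) ∧
    c'.q = q' ∧ c'.ipos = moveIpos c.ipos mi ∧
    (c'.wl, c'.wcur, c'.wr) = moveWork c.wl w c.wr mw

def initConfig (M : TM) : Config M := ⟨M.start, 0, [], .blank, []⟩

/-- Number of work-tape cells used by a configuration. -/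
def Config.workSize {M : TM} (c : Config M) : ℕ := c.wl.length + 1 + c.wr.length

def TMFinal (M : TM) (i : List Bool) (c : Config M) : Prop := ∀ c', ¬ TMStep M i c c'

/-- `⟨1⟩ := λx.λy.x` and `⟨0⟩ := λx.λy.y`. -/
def encBool (b : Bool) : Term :=
  if b then .lam 0 (.lam 1 (.var 0)) else .lam 0 (.lam 1 (.var 1))

namespace Term

theorem subst_not_free {x : ℕ} {u : Term} : ∀ {t : Term}, x ∉ t.fv → subst x u t = t
  | var y, h => by
      simp only [fv, Finset.mem_singleton] at h
      have : y ≠ x := fun hh => h hh.symm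
      simp [subst, this]
  | lam y t, h => by
      by_cases hy : y = x
      · simp [subst, hy]
      · simp only [fv, Finset.mem_sdiff, Finset.mem_singleton, not_and, not_not] at h
        have hx : x ∉ t.fv := fun hx => hy ((h hx).symm)
        simp [subst, hy, subst_not_free hx]
  | app t r, h => by
      simp only [fv, Finset.mem_union, not_or] at h
      simp [subst, subst_not_free h.1, subst_not_free h.2]

theorem fv_subst_closed {x : ℕ} {u : Term} (hu : u.fv = ∅) :
    ∀ t : Term, (subst x u t).fv ⊆ t.fv \ {x}
  | var y => by
      by_cases hy : y = x
      · simp [subst, hy, hu]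
      · simp only [subst, if_neg hy, fv]
        intro a ha
        simp only [Finset.mem_singleton] at ha
        subst ha
        simp [hy]
  | lam y t => by
      by_cases hy : y = x
      · subst hy
        simp only [subst, if_pos rfl, ↓reduceIte, fv]
        intro a ha
        simp only [Finset.mem_sdiff, Finset.mem_singleton] at ha ⊢
        exact ⟨⟨ha.1, ha.2⟩, ha.2⟩
      · simp only [subst, if_neg hy, fv]
        intro a ha
        simp only [Finset.mem_sdiff, Finset.mem_singleton] at ha ⊢
        have := fv_subst_closed hu t ha.1
        simp only [Finset.mem_sdiff, Finset.mem_singleton] at this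
        exact ⟨⟨this.1, ha.2⟩, this.2⟩
  | app t r => by
      simp only [subst, fv]
      intro a ha
      simp only [Finset.mem_union] at ha
      rcases ha with h | h
      · have := fv_subst_closed hu t h
        simp only [Finset.mem_sdiff, Finset.mem_union, Finset.mem_singleton] at this ⊢
        exact ⟨Or.inl this.1, this.2⟩
      · have := fv_subst_closed hu r h
        simp only [Finset.mem_sdiff, Finset.mem_union, Finset.mem_singleton] at this ⊢
        exact ⟨Or.inr this.1, this.2⟩

theorem subst_comm {x y : ℕ} {u v : Term} (hxy : x ≠ y) (hu : u.fv = ∅) (hv : v.fv = ∅) :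
    ∀ t : Term, subst x u (subst y v t) = subst y v (subst x u t)
  | var z => by
      by_cases hzy : z = y
      · subst hzy
        have hzx : z ≠ x := fun h => hxy h.symm
        have h1 : subst x u v = v := subst_not_free (by simp [hv])
        simp [subst, hzx, h1]
      · by_cases hzx : z = x
        · subst hzx
          have h1 : subst y v u = u := subst_not_free (by simp [hu])
          simp [subst, hzy, h1]
        · simp [subst, hzy, hzx]
  | lam z t => by
      by_cases hzy : z = y
      · subst hzy
        have hzx : z ≠ x := fun h => hxy h.symm
        simp [subst, hzx]
      · by_cases hzx : z = x
        · subst hzx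
          simp [subst, hzy]
        · simp [subst, hzx, hzy, subst_comm hxy hu hv t]
  | app t r => by simp [subst, subst_comm hxy hu hv t, subst_comm hxy hu hv r]

end Term
theorem Env.dom_restrict : ∀ (e : Env) (s : Finset ℕ), (e.restrict s).dom = e.dom ∩ s
  | .nil, s => by simp [Env.restrict, Env.dom]
  | .cons x c e, s => by
      by_cases hx : x ∈ s
      · simp [Env.restrict, hx, Env.dom, Env.dom_restrict e s, Finset.insert_inter_of_mem hx]
      · simp [Env.restrict, hx, Env.dom, Env.dom_restrict e s, Finset.insert_inter_of_notMem hx]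

theorem Env.closedE_restrict : ∀ (e : Env) (s : Finset ℕ), e.ClosedE → (e.restrict s).ClosedE
  | .nil, s, h => by simpa [Env.restrict] using h
  | .cons x c e, s, h => by
      simp only [Env.ClosedE] at h
      by_cases hx : x ∈ s
      · simp only [Env.restrict, if_pos hx, Env.ClosedE]
        exact ⟨h.1, Env.closedE_restrict e s h.2⟩
      · simp only [Env.restrict, if_neg hx]
        exact Env.closedE_restrict e s h.2

theorem Env.lookup_closed : ∀ {e : Env} {x : ℕ} {c : Clo}, e.ClosedE →
    Env.lookup e x = some c → c.Closed
  | .nil, x, c, h, hl => by simp [Env.lookup] at hl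
  | .cons y c' e, x, c, h, hl => by
      simp only [Env.ClosedE] at h
      by_cases hy : y = x
      · simp only [Env.lookup, if_pos hy, Option.some.injEq] at hl
        exact hl ▸ h.1
      · simp only [Env.lookup, if_neg hy] at hl
        exact Env.lookup_closed h.2 hl

theorem Env.lookup_of_mem_dom : ∀ {e : Env} {x : ℕ}, x ∈ e.dom → ∃ c, Env.lookup e x = some c
  | .nil, x, h => by simp [Env.dom] at h
  | .cons y c e, x, h => by
      by_cases hy : y = x
      · exact ⟨c, by simp [Env.lookup, hy]⟩
      · simp only [Env.dom, Finset.mem_insert] at h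
        rcases h with h | h
        · exact absurd h.symm hy
        · obtain ⟨c', hc⟩ := Env.lookup_of_mem_dom h
          exact ⟨c', by simp [Env.lookup, hy, hc]⟩

theorem Env.lookup_count : ∀ {e : Env} {x : ℕ} {u : Term} {e' : Env},
    Env.lookup e x = some (.mk u e') → Env.count e' < Env.count e
  | .nil, x, u, e', hl => by simp [Env.lookup] at hl
  | .cons y c e, x, u, e', hl => by
      by_cases hy : y = x
      · simp only [Env.lookup, if_pos hy, Option.some.injEq] at hl
        subst hl
        simp [Env.count, Clo.count]
        omega
      · simp only [Env.lookup, if_neg hy] at hl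
        have := Env.lookup_count hl
        simp only [Env.count]
        omega

theorem Env.count_restrict : ∀ (e : Env) (s : Finset ℕ), (e.restrict s).count ≤ e.count
  | .nil, s => le_refl _
  | .cons x c e, s => by
      have := Env.count_restrict e s
      by_cases hx : x ∈ s
      · simp only [Env.restrict, if_pos hx, Env.count]
        omega
      · simp only [Env.restrict, if_neg hx, Env.count]
        omega

theorem Env.decode_app : ∀ (e : Env) (t u : Term),
    Env.decode (.app t u) e = .app (Env.decode t e) (Env.decode u e)
  | .nil, t, u => by simp [Env.decode]
  | .cons x c e, t, u => by
      simp only [Env.decode, Term.subst]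
      exact Env.decode_app e _ _

theorem Env.decode_closed : ∀ (e : Env) {t : Term}, t.fv = ∅ → Env.decode t e = t
  | .nil, t, h => by simp [Env.decode]
  | .cons x c e, t, h => by
      simp only [Env.decode]
      rw [Term.subst_not_free (by simp [h])]
      exact Env.decode_closed e h

theorem Env.fv_decode : ∀ (e : Env) (he : e.ClosedE) (t : Term),
    (Env.decode t e).fv ⊆ t.fv \ e.dom
  | .nil, _, t => by simp [Env.decode, Env.dom]
  | .cons x (.mk v e2) e, h, t => by
      simp only [Env.ClosedE, Clo.Closed] at h
      have hc : (Clo.decode (.mk v e2)).fv = ∅ := by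
        have h1 := Env.fv_decode e2 h.1.2 v
        simp only [Clo.decode]
        rw [Finset.eq_empty_iff_forall_notMem]
        intro a ha
        have h2 := h1 ha
        simp only [Finset.mem_sdiff] at h2
        exact h2.2 (h.1.1 h2.1)
      have h2 := Env.fv_decode e h.2 (Term.subst x (Clo.decode (.mk v e2)) t)
      simp only [Env.decode, Env.dom]
      intro a ha
      have h3 := h2 ha
      simp only [Finset.mem_sdiff, Finset.mem_insert] at h3 ⊢
      have h4 := Term.fv_subst_closed hc t h3.1
      simp only [Finset.mem_sdiff, Finset.mem_singleton] at h4
      exact ⟨h4.1, fun hh => hh.elim h4.2 h3.2⟩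
termination_by e => Env.count e
decreasing_by
  all_goals simp only [Env.count, Clo.count]
  all_goals omega

theorem Clo.fv_decode {c : Clo} (h : c.Closed) : c.decode.fv = ∅ := by
  obtain ⟨t, e⟩ := c
  simp only [Clo.Closed] at h
  have h1 := Env.fv_decode e h.2 t
  simp only [Clo.decode]
  rw [Finset.eq_empty_iff_forall_notMem]
  intro a ha
  have h2 := h1 ha
  simp only [Finset.mem_sdiff] at h2
  exact h2.2 (h.1 h2.1)

theorem Env.decode_restrict : ∀ (e : Env) (he : e.ClosedE) (t : Term) (s : Finset ℕ)
    (hts : t.fv ⊆ s), Env.decode t (e.restrict s) = Env.decode t e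
  | .nil, _, t, s, hts => by simp [Env.restrict]
  | .cons x c e, h, t, s, hts => by
      simp only [Env.ClosedE] at h
      by_cases hx : x ∈ s
      · simp only [Env.restrict, if_pos hx, Env.decode]
        apply Env.decode_restrict e h.2
        intro a ha
        have := Term.fv_subst_closed (Clo.fv_decode h.1) t ha
        simp only [Finset.mem_sdiff] at this
        exact hts this.1
      · have hxt : x ∉ t.fv := fun hc => hx (hts hc)
        simp only [Env.restrict, if_neg hx, Env.decode, Term.subst_not_free hxt]
        exact Env.decode_restrict e h.2 t s hts

theorem Env.decode_var : ∀ (e : Env) (he : e.ClosedE) {x : ℕ} {c : Clo},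
    Env.lookup e x = some c → Env.decode (.var x) e = c.decode
  | .nil, _, x, c, hl => by simp [Env.lookup] at hl
  | .cons y c' e, h, x, c, hl => by
      simp only [Env.ClosedE] at h
      by_cases hy : y = x
      · subst hy
        have hc' : c' = c := by simpa [Env.lookup] using hl
        subst hc'
        simp only [Env.decode, Term.subst, if_pos rfl]
        exact Env.decode_closed e (Clo.fv_decode h.1)
      · simp only [Env.lookup, if_neg hy] at hl
        have hs : Term.subst y c'.decode (.var x) = .var x := by
          have : x ≠ y := fun hh => hy hh.symm
          simp [Term.subst, this]
        simp only [Env.decode, hs]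
        exact Env.decode_var e h.2 hl

theorem Env.decode_lam : ∀ (e : Env) (x : ℕ) (t : Term),
    ∃ y s, Env.decode (.lam x t) e = .lam y s
  | .nil, x, t => ⟨x, t, by simp [Env.decode]⟩
  | .cons z c e, x, t => by
      by_cases hz : x = z
      · simpa [Env.decode, Term.subst, hz] using Env.decode_lam e x t
      · simpa [Env.decode, Term.subst, hz] using Env.decode_lam e x (Term.subst z c.decode t)

theorem beta_commute : ∀ (e : Env) (he : e.ClosedE) (x : ℕ) (t v : Term) (hv : v.fv = ∅),
    Whr (.app (Env.decode (.lam x t) e) v) (Env.decode (Term.subst x v t) e)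
  | .nil, _, x, t, v, hv => by
      simpa [Env.decode] using Whr.beta x t v
  | .cons y c e, h, x, t, v, hv => by
      simp only [Env.ClosedE] at h
      have hc := Clo.fv_decode h.1
      by_cases hy : x = y
      · subst hy
        simp only [Env.decode, Term.subst, if_pos rfl]
        rw [Term.subst_not_free (t := Term.subst x v t) ?_]
        · exact beta_commute e h.2 x t v hv
        · intro hmem
          have := Term.fv_subst_closed hv t hmem
          simp at this
      · simp only [Env.decode, Term.subst, if_neg hy]
        rw [← Term.subst_comm hy hv hc t]
        exact beta_commute e h.2 x (Term.subst y c.decode t) v hv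
theorem whr_foldl : ∀ (S : List Clo) {a b : Term}, Whr a b →
    Whr (S.foldl (fun a c => .app a c.decode) a) (S.foldl (fun a c => .app a c.decode) b)
  | [], _, _, h => h
  | c :: S, a, b, h => whr_foldl S (Whr.appL _ h)

def KInv (s : State) : Prop := s.tm.fv ⊆ s.env.dom ∧ s.env.ClosedE ∧ ∀ c ∈ s.stk, c.Closed

theorem kinv_seav {t : Term} {x : ℕ} {e : Env} {c : Clo} {S : List Clo}
    (hl : Env.lookup e x = some c) (h : KInv ⟨.app t (.var x), e, S⟩) :
    KInv ⟨t, e.restrict t.fv, c :: S⟩ := by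
  obtain ⟨h1, h2, h3⟩ := h
  simp only [KInv, Term.fv] at h1 ⊢
  refine ⟨?_, Env.closedE_restrict e _ h2, ?_⟩
  · rw [Env.dom_restrict]
    intro a ha
    exact Finset.mem_inter.mpr ⟨h1 (Finset.mem_union_left _ ha), ha⟩
  · intro c' hc'
    rcases List.mem_cons.mp hc' with h | h
    · exact h ▸ Env.lookup_closed h2 hl
    · exact h3 c' h

theorem kinv_seanv {t u : Term} {e : Env} {S : List Clo}
    (h : KInv ⟨.app t u, e, S⟩) :
    KInv ⟨t, e.restrict t.fv, .mk u (e.restrict u.fv) :: S⟩ := by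
  obtain ⟨h1, h2, h3⟩ := h
  simp only [KInv, Term.fv] at h1 ⊢
  refine ⟨?_, Env.closedE_restrict e _ h2, ?_⟩
  · rw [Env.dom_restrict]
    intro a ha
    exact Finset.mem_inter.mpr ⟨h1 (Finset.mem_union_left _ ha), ha⟩
  · intro c' hc'
    rcases List.mem_cons.mp hc' with hh | hh
    · subst hh
      simp only [Clo.Closed]
      refine ⟨?_, Env.closedE_restrict e _ h2⟩
      rw [Env.dom_restrict]
      intro a ha
      exact Finset.mem_inter.mpr ⟨h1 (Finset.mem_union_right _ ha), ha⟩
    · exact h3 c' hh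

theorem kinv_betaw {x : ℕ} {t : Term} {e : Env} {c : Clo} {S : List Clo}
    (hx : x ∉ t.fv) (h : KInv ⟨.lam x t, e, c :: S⟩) : KInv ⟨t, e, S⟩ := by
  obtain ⟨h1, h2, h3⟩ := h
  simp only [KInv, Term.fv] at h1 ⊢
  refine ⟨?_, h2, fun c' hc' => h3 c' (List.mem_cons_of_mem _ hc')⟩
  intro a ha
  exact h1 (Finset.mem_sdiff.mpr ⟨ha, by simp; rintro rfl; exact hx ha⟩)

theorem kinv_betanw {x : ℕ} {t : Term} {e : Env} {c : Clo} {S : List Clo}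
    (h : KInv ⟨.lam x t, e, c :: S⟩) : KInv ⟨t, .cons x c e, S⟩ := by
  obtain ⟨h1, h2, h3⟩ := h
  simp only [KInv, Term.fv, Env.dom, Env.ClosedE] at h1 ⊢
  refine ⟨?_, ⟨h3 c (List.mem_cons_self), h2⟩,
    fun c' hc' => h3 c' (List.mem_cons_of_mem _ hc')⟩
  intro a ha
  by_cases hax : a = x
  · simp [hax]
  · exact Finset.mem_insert_of_mem (h1 (Finset.mem_sdiff.mpr ⟨ha, by simp [hax]⟩))

theorem kinv_sub {x : ℕ} {e : Env} {u : Term} {e' : Env} {S : List Clo}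
    (hl : Env.lookup e x = some (.mk u e')) (h : KInv ⟨.var x, e, S⟩) :
    KInv ⟨u, e', S⟩ := by
  obtain ⟨h1, h2, h3⟩ := h
  have hc := Env.lookup_closed h2 hl
  simp only [Clo.Closed] at hc
  exact ⟨hc.1, hc.2, h3⟩

theorem decode_seav {t : Term} {x : ℕ} {e : Env} {c : Clo} {S : List Clo}
    (he : e.ClosedE) (hl : Env.lookup e x = some c) :
    State.decode ⟨t, e.restrict t.fv, c :: S⟩ = State.decode ⟨.app t (.var x), e, S⟩ := by
  simp only [State.decode, List.foldl_cons]
  congr 1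
  rw [Env.decode_app, Env.decode_restrict e he t t.fv (Finset.Subset.refl _),
    Env.decode_var e he hl]

theorem decode_seanv {t u : Term} {e : Env} {S : List Clo} (he : e.ClosedE) :
    State.decode ⟨t, e.restrict t.fv, .mk u (e.restrict u.fv) :: S⟩ =
      State.decode ⟨.app t u, e, S⟩ := by
  simp only [State.decode, List.foldl_cons]
  congr 1
  rw [Env.decode_app, Env.decode_restrict e he t t.fv (Finset.Subset.refl _)]
  simp only [Clo.decode]
  rw [Env.decode_restrict e he u u.fv (Finset.Subset.refl _)]

theorem decode_sub {x : ℕ} {e : Env} {u : Term} {e' : Env} {S : List Clo}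
    (he : e.ClosedE) (hl : Env.lookup e x = some (.mk u e')) :
    State.decode ⟨u, e', S⟩ = State.decode ⟨.var x, e, S⟩ := by
  simp only [State.decode]
  congr 1
  rw [Env.decode_var e he hl]
  simp [Clo.decode]

theorem decode_betaw {x : ℕ} {t : Term} {e : Env} {c : Clo} {S : List Clo}
    (hx : x ∉ t.fv) :
    State.decode ⟨t, e, S⟩ = State.decode ⟨t, .cons x c e, S⟩ := by
  simp only [State.decode]
  congr 1
  simp only [Env.decode]
  rw [Term.subst_not_free hx]

theorem whr_beta_state {x : ℕ} {t : Term} {e : Env} {c : Clo} {S : List Clo}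
    (he : e.ClosedE) (hc : c.Closed) :
    Whr (State.decode ⟨.lam x t, e, c :: S⟩) (State.decode ⟨t, .cons x c e, S⟩) := by
  simp only [State.decode, List.foldl_cons]
  apply whr_foldl
  have h := beta_commute e he x t c.decode (Clo.fv_decode hc)
  simpa only [Env.decode] using h

theorem whr_det : ∀ {a b b' : Term}, Whr a b → Whr a b' → b = b' := by
  intro a b b' h1
  induction h1 generalizing b' with
  | beta x t u =>
      intro h2
      cases h2 with
      | beta => rfl
      | appL _ h => cases h
  | appL u h ih =>
      intro h2
      cases h2 with
      | beta => cases h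
      | appL _ h' => rw [ih h']

theorem nsteps_normal {n : ℕ} {a u : Term} (hn : WhNormal a) (h : NSteps Whr n a u) :
    n = 0 ∧ u = a := by
  cases h with
  | refl => exact ⟨rfl, rfl⟩
  | head hs _ => exact absurd hs (hn _)

theorem lam_final {x : ℕ} {t : Term} {e : Env} : SKFinal ⟨.lam x t, e, []⟩ := by
  intro s' h
  cases h

theorem lam_normal {x : ℕ} {t : Term} {e : Env} :
    WhNormal (State.decode ⟨.lam x t, e, []⟩) := by
  obtain ⟨y, r, hr⟩ := Env.decode_lam e x t
  intro w h
  simp only [State.decode, List.foldl_nil] at h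
  rw [hr] at h
  cases h

theorem to_final : ∀ (n : ℕ) (t : Term) (e : Env) (S : List Clo)
    (inv : KInv ⟨t, e, S⟩) (u : Term) (hs : NSteps Whr n (State.decode ⟨t, e, S⟩) u)
    (hn : WhNormal u),
    ∃ s', SKRun n ⟨t, e, S⟩ s' ∧ SKFinal s' ∧ s'.decode = u
  | n, .var x, e, S, inv, u, hs, hn => by
      have hx : x ∈ e.dom := inv.1 (by simp [Term.fv])
      obtain ⟨⟨v, e'⟩, hl⟩ := Env.lookup_of_mem_dom hx
      rw [← decode_sub inv.2.1 hl] at hs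
      obtain ⟨s', hr, hf, hd⟩ := to_final n v e' S (kinv_sub hl inv) u hs hn
      exact ⟨s', SKRun.sub hl hr, hf, hd⟩
  | n, .app t (.var x), e, S, inv, u, hs, hn => by
      have hx : x ∈ e.dom := inv.1 (by simp [Term.fv])
      obtain ⟨c, hl⟩ := Env.lookup_of_mem_dom hx
      rw [← decode_seav inv.2.1 hl] at hs
      obtain ⟨s', hr, hf, hd⟩ :=
        to_final n t (e.restrict t.fv) (c :: S) (kinv_seav hl inv) u hs hn
      exact ⟨s', SKRun.seav hl hr, hf, hd⟩
  | n, .app t (.lam y r), e, S, inv, u, hs, hn => by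
      rw [← decode_seanv inv.2.1] at hs
      obtain ⟨s', hr, hf, hd⟩ :=
        to_final n t (e.restrict t.fv) (.mk (.lam y r) (e.restrict (Term.lam y r).fv) :: S)
          (kinv_seanv inv) u hs hn
      exact ⟨s', SKRun.seanv (by intro z h; cases h) hr, hf, hd⟩
  | n, .app t (.app a b), e, S, inv, u, hs, hn => by
      rw [← decode_seanv inv.2.1] at hs
      obtain ⟨s', hr, hf, hd⟩ :=
        to_final n t (e.restrict t.fv) (.mk (.app a b) (e.restrict (Term.app a b).fv) :: S)
          (kinv_seanv inv) u hs hn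
      exact ⟨s', SKRun.seanv (by intro z h; cases h) hr, hf, hd⟩
  | n, .lam x t, e, [], inv, u, hs, hn => by
      obtain ⟨h0, hu⟩ := nsteps_normal lam_normal hs
      subst h0
      exact ⟨⟨.lam x t, e, []⟩, SKRun.refl _, lam_final, hu.symm⟩
  | n, .lam x t, e, c :: S, inv, u, hs, hn => by
      have hc : c.Closed := inv.2.2 c (List.mem_cons_self)
      have hw := whr_beta_state (x := x) (t := t) (S := S) inv.2.1 hc
      match n, hs with
      | _, NSteps.refl _ => exact absurd hw (hn _)
      | _, NSteps.head (n := m) hstep hrest =>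
          rw [← whr_det hw hstep] at hrest
          by_cases hx : x ∈ t.fv
          · obtain ⟨s', hr, hf, hd⟩ :=
              to_final m t (.cons x c e) S (kinv_betanw inv) u hrest hn
            exact ⟨s', SKRun.betanw hx hr, hf, hd⟩
          · rw [← decode_betaw (e := e) (c := c) hx] at hrest
            obtain ⟨s', hr, hf, hd⟩ :=
              to_final m t e S (kinv_betaw hx inv) u hrest hn
            exact ⟨s', SKRun.betaw hx hr, hf, hd⟩
termination_by n t e S => (n, Env.count e, sizeOf t)
decreasing_by
  all_goals simp_wf
  · exact Prod.Lex.right _ (Prod.Lex.left _ _ (Env.lookup_count hl))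
  · rcases Nat.lt_or_eq_of_le (Env.count_restrict e t.fv) with h | h
    · exact Prod.Lex.right _ (Prod.Lex.left _ _ h)
    · rw [h]; exact Prod.Lex.right _ (Prod.Lex.right _ (by omega))
  · rcases Nat.lt_or_eq_of_le (Env.count_restrict e t.fv) with h | h
    · exact Prod.Lex.right _ (Prod.Lex.left _ _ h)
    · rw [h]; exact Prod.Lex.right _ (Prod.Lex.right _ (by omega))
  · rcases Nat.lt_or_eq_of_le (Env.count_restrict e t.fv) with h | h
    · exact Prod.Lex.right _ (Prod.Lex.left _ _ h)
    · rw [h]; exact Prod.Lex.right _ (Prod.Lex.right _ (by omega))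
  · exact Prod.Lex.left _ _ (Nat.lt_succ_self m)
  · exact Prod.Lex.left _ _ (Nat.lt_succ_self m)

theorem run_inv : ∀ {n : ℕ} {s s' : State}, SKRun n s s' → KInv s → KInv s' := by
  intro n s s' h
  induction h with
  | refl => exact id
  | seav hl _ ih => exact fun inv => ih (kinv_seav hl inv)
  | seanv hnv _ ih => exact fun inv => ih (kinv_seanv inv)
  | betaw hx _ ih => exact fun inv => ih (kinv_betaw hx inv)
  | betanw hx _ ih => exact fun inv => ih (kinv_betanw inv)
  | sub hl _ ih => exact fun inv => ih (kinv_sub hl inv)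

theorem run_sound : ∀ {n : ℕ} {s s' : State}, SKRun n s s' → KInv s →
    NSteps Whr n s.decode s'.decode := by
  intro n s s' h
  induction h with
  | refl => exact fun _ => NSteps.refl _
  | seav hl _ ih =>
      intro inv
      have := ih (kinv_seav hl inv)
      rwa [decode_seav inv.2.1 hl] at this
  | seanv hnv _ ih =>
      intro inv
      have := ih (kinv_seanv inv)
      rwa [decode_seanv inv.2.1] at this
  | @betaw x t e c S s' m hx _ ih =>
      intro inv
      have hc : c.Closed := inv.2.2 c (List.mem_cons_self)
      have hw := whr_beta_state (x := x) (t := t) (S := S) inv.2.1 hc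
      rw [← decode_betaw (e := e) (c := c) hx] at hw
      exact NSteps.head hw (ih (kinv_betaw hx inv))
  | betanw hx _ ih =>
      intro inv
      have hc := inv.2.2 _ (List.mem_cons_self)
      exact NSteps.head (whr_beta_state inv.2.1 hc) (ih (kinv_betanw inv))
  | sub hl _ ih =>
      intro inv
      have := ih (kinv_sub hl inv)
      rwa [decode_sub inv.2.1 hl] at this

theorem final_normal : ∀ {s : State}, KInv s → SKFinal s → WhNormal s.decode := by
  rintro ⟨t, e, S⟩ inv fin
  match t, S with
  | .var x, S =>
      exfalso
      have hx : x ∈ e.dom := inv.1 (by simp [Term.fv])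
      obtain ⟨⟨v, e'⟩, hl⟩ := Env.lookup_of_mem_dom hx
      exact fin _ (SK.sub S hl)
  | .app t (.var x), S =>
      exfalso
      have hx : x ∈ e.dom := inv.1 (by simp [Term.fv])
      obtain ⟨c, hl⟩ := Env.lookup_of_mem_dom hx
      exact fin _ (SK.seav S hl)
  | .app t (.lam y r), S => exact absurd (SK.seanv S (by intro z h; cases h)) (fin _)
  | .app t (.app a b), S => exact absurd (SK.seanv S (by intro z h; cases h)) (fin _)
  | .lam x t, [] => exact lam_normal
  | .lam x t, c :: S =>
      exfalso
      by_cases hx : x ∈ t.fv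
      · exact fin _ (SK.betanw c S hx)
      · exact fin _ (SK.betaw c S hx)
theorem init_kinv {t : Term} (ht : t.closed) : KInv (initState t) := by
  refine ⟨?_, ?_, ?_⟩
  · simp only [initState, Term.closed] at ht ⊢
    rw [ht]
    exact Finset.empty_subset _
  · simp [initState, Env.ClosedE]
  · simp [initState]

theorem init_decode {t : Term} : (initState t).decode = t := by
  simp [initState, State.decode, Env.decode]

/-- The Space KAM implements Closed Call-by-Name
(β-transitions of the machine are `→βw` and `→β¬w`). -/
theorem space_kam_implements_closed_cbn
    (t : Term) (ht : t.closed) (n : ℕ) (u : Term) :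
    (NSteps Whr n t u ∧ WhNormal u) ↔
      (∃ s : State, SKRun n (initState t) s ∧ SKFinal s ∧ s.decode = u) := by
  constructor
  · rintro ⟨hsteps, hnorm⟩
    have hs : NSteps Whr n (State.decode ⟨t, .nil, []⟩) u := by
      rw [show State.decode ⟨t, .nil, []⟩ = t from init_decode]
      exact hsteps
    obtain ⟨s', hr, hf, hd⟩ := to_final n t .nil [] (init_kinv ht) u hs hnorm
    exact ⟨s', hr, hf, hd⟩
  · rintro ⟨s, hr, hf, hd⟩
    have h1 := run_sound hr (init_kinv ht)
    rw [init_decode, hd] at h1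
    have h2 := final_normal (run_inv hr (init_kinv ht)) hf
    rw [hd] at h2
    exact ⟨h1, h2⟩
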